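/- Let Δ be a family of coverings of the finite set U and 𝒟 a partition of U, and let ∪Δ denote the union covering {C : C ∈ 𝒞 for some 𝒞 ∈ Δ}. Define POS_{∪Δ}(𝒟) = ⋃_{D ∈ 𝒟} ⋃{K ∈ ∪Δ : K ⊆ D and K ∈ Md_{∪Δ}(y) for some y ∈ U}. Then (U,Δ,𝒟) is a consistent covering decision information system if and only if POS_{∪Δ}(𝒟) = U. -/

import Mathlib

/-- `𝒞` is a covering of `U`: a family of nonempty subsets of `U` whose union equals `U`. -/
def IsCovering {α : Type*} (U : Set α) (𝒞 : Set (Set α)) : Prop :=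
  (∀ C ∈ 𝒞, C.Nonempty) ∧ ⋃₀ 𝒞 = U

/-- `𝒟` is a partition of `U`: a covering whose members are pairwise disjoint. -/
def IsPartitionOf {α : Type*} (U : Set α) (𝒟 : Set (Set α)) : Prop :=
  IsCovering U 𝒟 ∧ ∀ D₁ ∈ 𝒟, ∀ D₂ ∈ 𝒟, D₁ ≠ D₂ → Disjoint D₁ D₂

/-- The minimal description of `x`:
`Md_𝒞(x) = {K ∈ 𝒞 : x ∈ K ∧ ∀ S ∈ 𝒞, x ∈ S → S ⊆ K → S = K}`. -/
def Md {α : Type*} (𝒞 : Set (Set α)) (x : α) : Set (Set α) :=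
  {K ∈ 𝒞 | x ∈ K ∧ ∀ S ∈ 𝒞, x ∈ S → S ⊆ K → S = K}

/-- for a family `Δ` of coverings of the finite set `U` and a partition `𝒟`
of `U`, with `∪Δ = ⋃₀ Δ` the union covering and
`POS_{∪Δ}(𝒟) = ⋃_{D ∈ 𝒟} ⋃{K ∈ ∪Δ : K ⊆ D ∧ K ∈ Md_{∪Δ}(y) for some y ∈ U}`,
the system `(U,Δ,𝒟)` is consistent iff `POS_{∪Δ}(𝒟) = U`. -/
theorem stmt9 {α : Type*} (U : Set α) (hUfin : U.Finite)
    (Δ : Set (Set (Set α))) (hΔ : ∀ 𝒞 ∈ Δ, IsCovering U 𝒞)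
    (𝒟 : Set (Set α)) (h𝒟 : IsPartitionOf U 𝒟) :
    (∀ x ∈ U, ∃ K ∈ ⋃₀ Δ, ∃ D ∈ 𝒟, x ∈ K ∧ K ⊆ D) ↔
      (⋃ D ∈ 𝒟, ⋃₀ {K ∈ ⋃₀ Δ | K ⊆ D ∧ ∃ y ∈ U, K ∈ Md (⋃₀ Δ) y}) = U := by
  have hsubU : ∀ K ∈ ⋃₀ Δ, K ⊆ U := by
    rintro K ⟨𝒞, h𝒞, hK⟩
    have := (hΔ 𝒞 h𝒞).2
    exact this ▸ Set.subset_sUnion_of_mem hK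
  constructor
  · intro h
    apply Set.eq_of_subset_of_subset
    · rintro x hx
      simp only [Set.mem_iUnion] at hx
      obtain ⟨D, hD, K, hKmem, hxK⟩ := hx
      exact hsubU K hKmem.1 hxK
    · intro x hxU
      obtain ⟨K, hK, D, hD, hxK, hKD⟩ := h x hxU
      -- find a minimal element of ∪Δ containing x and contained in K
      set 𝒮 := {S ∈ ⋃₀ Δ | x ∈ S ∧ S ⊆ K} with h𝒮
      have hfin : 𝒮.Finite := by
        apply Set.Finite.subset hUfin.finite_subsets
        rintro S ⟨hS, _, _⟩
        exact hsubU S hS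
      have hne : 𝒮.Nonempty := ⟨K, hK, hxK, subset_rfl⟩
      obtain ⟨K', hK'mem, hK'min⟩ : ∃ a ∈ 𝒮, ∀ a' ∈ 𝒮, id a' ≤ id a → id a = id a' := by
        obtain ⟨a, ha⟩ := hfin.exists_minimal hne
        exact ⟨a, ha.prop, fun b hb hle => ha.eq_of_ge hb hle⟩
      obtain ⟨hK'Δ, hxK', hK'K⟩ := hK'mem
      have hMd : K' ∈ Md (⋃₀ Δ) x := by
        refine ⟨hK'Δ, hxK', fun S hS hxS hSK' => ?_⟩
        exact (hK'min S ⟨hS, hxS, hSK'.trans hK'K⟩ hSK').symm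
      simp only [Set.mem_iUnion]
      exact ⟨D, hD, K', ⟨hK'Δ, hK'K.trans hKD, x, hxU, hMd⟩, hxK'⟩
  · intro h x hxU
    rw [← h] at hxU
    simp only [Set.mem_iUnion] at hxU
    obtain ⟨D, hD, K, ⟨hKΔ, hKD, _⟩, hxK⟩ := hxU
    exact ⟨K, hKΔ, D, hD, hxK, hKD⟩
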